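/- arXiv:math/0504368 — 2 statements merged into one kernel-verified Lean document; each statement's English description precedes it below -/
import Mathlib

section
/- Let A be a perfect k-algebra and let S be a finite-dimensional commutative associative unital k-algebra. Then the map ψ : C(A)⊗S → C(A⊗S), determined by ψ(γ⊗s) = γ⊗L_s, is an isomorphism of associative algebras. -/
open TensorProduct
set_option synthInstance.maxHeartbeats 1000000
set_option maxHeartbeats 2000000
noncomputable section
def Derivations (k B : Type) [Field k] [NonUnitalNonAssocSemiring B] [Module k B]
    [SMulCommClass k B B] [IsScalarTower k B B] :
    Submodule k (Module.End k B) where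
  carrier := {d | ∀ x y : B, d (x * y) = d x * y + x * d y}
  add_mem' := by
    intro f g hf hg x y
    simp only [LinearMap.add_apply, hf x y, hg x y, add_mul, mul_add]
    abel
  zero_mem' := by intro x y; simp
  smul_mem' := by
    intro c f hf x y
    simp only [LinearMap.smul_apply, hf x y, smul_add, smul_mul_assoc, mul_smul_comm]

/-- The centroid of a (possibly non-associative, non-unital) `k`-algebra `B`, as a
subalgebra of `Module.End k B`. -/
def centroid (k B : Type) [Field k] [NonUnitalNonAssocSemiring B] [Module k B]
    [SMulCommClass k B B] [IsScalarTower k B B] :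
    Subalgebra k (Module.End k B) where
  carrier := {γ | ∀ x y : B, γ (x * y) = γ x * y ∧ γ (x * y) = x * γ y}
  mul_mem' := by
    intro γ δ hγ hδ x y
    constructor
    · show γ (δ (x * y)) = γ (δ x) * y
      rw [(hδ x y).1, (hγ (δ x) y).1]
    · show γ (δ (x * y)) = x * γ (δ y)
      rw [(hδ x y).2, (hγ x (δ y)).2]
  one_mem' := by intro x y; exact ⟨rfl, rfl⟩
  add_mem' := by
    intro γ δ hγ hδ x y
    constructor
    · simp [LinearMap.add_apply, (hγ x y).1, (hδ x y).1, add_mul]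
    · simp [LinearMap.add_apply, (hγ x y).2, (hδ x y).2, mul_add]
  zero_mem' := by intro x y; simp
  algebraMap_mem' := by
    intro c x y
    constructor
    · simp [Module.algebraMap_end_apply, smul_mul_assoc]
    · simp [Module.algebraMap_end_apply, mul_smul_comm]

/-- A `k`-algebra is perfect if it is spanned by products. -/
def IsPerfectAlg (k B : Type) [Field k] [NonUnitalNonAssocSemiring B] [Module k B] : Prop :=
  Submodule.span k {z : B | ∃ x y : B, x * y = z} = ⊤

/-- The natural map `ψ : C(A) ⊗ S → End(A ⊗ S)`, `γ ⊗ s ↦ γ ⊗ L_s`. -/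
def psi (k A S : Type) [Field k] [NonUnitalNonAssocRing A] [Module k A]
    [SMulCommClass k A A] [IsScalarTower k A A] [CommRing S] [Algebra k S] :
    (↥(centroid k A) ⊗[k] S) →ₗ[k] Module.End k (A ⊗[k] S) :=
  (TensorProduct.homTensorHomMap (RingHom.id k) A S A S).comp
    (TensorProduct.map (centroid k A).val.toLinearMap (LinearMap.mul k S))
/-- `B` is finitely generated as a module over a set `Γ` of `k`-linear endomorphisms
(e.g. over its centroid or differential centroid). -/
def FGOverSet (k B : Type) [Field k] [AddCommMonoid B] [Module k B]
    (Γ : Set (Module.End k B)) : Prop :=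
  ∃ (n : ℕ) (a : Fin n → B), ∀ x : B, ∃ γ : Fin n → Module.End k B,
    (∀ i, γ i ∈ Γ) ∧ x = ∑ i, γ i (a i)



section Coeff

variable {k S : Type} [Field k] [CommRing S] [Algebra k S]
variable {ι : Type} [DecidableEq ι] (b : Module.Basis ι k S)
variable (M : Type) [AddCommMonoid M] [Module k M]

/-- Coefficient extraction for `M ⊗ S` with respect to a basis of `S`. -/
def tcoeff : M ⊗[k] S ≃ₗ[k] (ι →₀ M) :=
  (TensorProduct.congr (LinearEquiv.refl k M) b.repr).trans
    (TensorProduct.finsuppScalarRight k k M ι)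

lemma tcoeff_tmul (m : M) (s : S) (i : ι) :
    tcoeff b M (m ⊗ₜ[k] s) i = b.repr s i • m := by
  simp [tcoeff]

lemma sum_tcoeff [Fintype ι] (z : M ⊗[k] S) :
    ∑ i, (tcoeff b M z i) ⊗ₜ[k] (b i) = z := by
  induction z using TensorProduct.induction_on with
  | zero => simp
  | tmul m s =>
      simp only [tcoeff_tmul]
      simp_rw [TensorProduct.smul_tmul]
      rw [← TensorProduct.tmul_sum, b.sum_repr]
  | add x y hx hy =>
      simp only [map_add, Finsupp.add_apply, TensorProduct.add_tmul, Finset.sum_add_distrib,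
        hx, hy]

lemma tcoeff_sum [Fintype ι] (g : ι → M) (j : ι) :
    tcoeff b M (∑ i, (g i) ⊗ₜ[k] (b i)) j = g j := by
  rw [map_sum, Finsupp.finset_sum_apply]
  simp [tcoeff_tmul, Finsupp.single_apply]

end Coeff

section PsiHom
variable (k A S : Type) [Field k] [NonUnitalNonAssocRing A] [Module k A]
    [SMulCommClass k A A] [IsScalarTower k A A] [CommRing S] [Algebra k S]

/-- `psi` as an algebra hom. -/
def psiHom : (↥(centroid k A) ⊗[k] S) →ₐ[k] Module.End k (A ⊗[k] S) :=
  (Module.endTensorEndAlgHom (R := k) (S := k) (A := k) (M := A) (N := S)).comp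
    (Algebra.TensorProduct.map (centroid k A).val (Algebra.lmul k S))

lemma psi_eq_psiHom : psi k A S = (psiHom k A S).toLinearMap := by
  apply TensorProduct.ext'
  intro γ s
  rfl

lemma psi_tmul (γ : centroid k A) (s : S) (a : A) (t : S) :
    psi k A S (γ ⊗ₜ[k] s) (a ⊗ₜ[k] t) = (γ : Module.End k A) a ⊗ₜ[k] (s * t) := rfl

end PsiHom

/-- Lemma 1.1(i): if `A` is perfect and `S` is a finite-dimensional commutative associative
unital algebra, then `ψ : C(A) ⊗ S → C(A ⊗ S)` is an isomorphism of associative algebras. -/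
theorem psi_isomorphism_of_perfect_of_finiteDimensional
    (k A S : Type) [Field k] [NonUnitalNonAssocRing A] [Module k A]
    [SMulCommClass k A A] [IsScalarTower k A A] [CommRing S] [Algebra k S]
    (hA : IsPerfectAlg k A) (hS : FiniteDimensional k S) :
    Function.Injective (psi k A S) ∧
      (∀ x y : ↥(centroid k A) ⊗[k] S, psi k A S (x * y) = psi k A S x * psi k A S y) ∧
      psi k A S 1 = 1 ∧
      (∀ T : Module.End k (A ⊗[k] S),
        T ∈ LinearMap.range (psi k A S) ↔ T ∈ centroid k (A ⊗[k] S)) := by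
  classical
  haveI : Module.Finite k S := hS
  set n := Module.finrank k S with hn
  let b : Module.Basis (Fin n) k S := Module.finBasis k S
  have hT'mem : ∀ (T : Module.End k (A ⊗[k] S)), T ∈ centroid k (A ⊗[k] S) →
      ∀ u v : A ⊗[k] S, T (u * v) = T u * v ∧ T (u * v) = u * T v := fun T hT => hT
  -- how `psi` acts, in terms of coefficients
  have hpsi : ∀ (u : ↥(centroid k A) ⊗[k] S) (a : A) (s : S),
      psi k A S u (a ⊗ₜ[k] s)
        = ∑ i, ((tcoeff b ↥(centroid k A) u i : Module.End k A) a) ⊗ₜ[k] (b i * s) := by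
    intro u a s
    conv_lhs => rw [← sum_tcoeff b ↥(centroid k A) u]
    rw [map_sum, LinearMap.sum_apply]
    exact Finset.sum_congr rfl fun i _ => psi_tmul k A S _ _ a s
  refine ⟨?_, ?_, ?_, ?_⟩
  · -- injectivity
    have h0 : ∀ u : ↥(centroid k A) ⊗[k] S, psi k A S u = 0 → u = 0 := by
      intro u hu
      have hc : ∀ i, tcoeff b ↥(centroid k A) u i = 0 := by
        intro i
        apply Subtype.ext
        apply LinearMap.ext
        intro a
        have h1 : ((tcoeff b ↥(centroid k A) u i : Module.End k A)) a
            = tcoeff b A (psi k A S u (a ⊗ₜ[k] (1 : S))) i := by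
          rw [hpsi u a 1]
          simp only [mul_one]
          exact (tcoeff_sum b A
            (fun x => ((tcoeff b ↥(centroid k A) u x : Module.End k A)) a) i).symm
        rw [hu] at h1
        simpa using h1
      rw [← sum_tcoeff b ↥(centroid k A) u]
      simp [hc]
    exact fun x y hxy => sub_eq_zero.mp (h0 (x - y) (by rw [map_sub, hxy, sub_self]))
  · -- multiplicativity
    intro x y
    simp only [psi_eq_psiHom, AlgHom.toLinearMap_apply]
    exact map_mul _ x y
  · -- unitality
    simp only [psi_eq_psiHom, AlgHom.toLinearMap_apply]
    exact map_one _
  · -- range is the centroid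
    intro T
    constructor
    · rintro ⟨u, rfl⟩
      induction u using TensorProduct.induction_on with
      | zero => rw [map_zero]; exact Subalgebra.zero_mem _
      | tmul γ s =>
          intro z w
          induction z using TensorProduct.induction_on with
          | zero => simp
          | tmul x t =>
              induction w using TensorProduct.induction_on with
              | zero => simp
              | tmul y r =>
                  constructor
                  · rw [Algebra.TensorProduct.tmul_mul_tmul, psi_tmul, psi_tmul,
                      Algebra.TensorProduct.tmul_mul_tmul, (γ.2 x y).1, mul_assoc]
                  · rw [Algebra.TensorProduct.tmul_mul_tmul, psi_tmul, psi_tmul,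
                      Algebra.TensorProduct.tmul_mul_tmul, (γ.2 x y).2, mul_left_comm]
              | add w₁ w₂ ih₁ ih₂ =>
                  obtain ⟨ha₁, hb₁⟩ := ih₁
                  obtain ⟨ha₂, hb₂⟩ := ih₂
                  constructor
                  · rw [mul_add, map_add, ha₁, ha₂, mul_add]
                  · rw [mul_add, map_add, hb₁, hb₂, map_add, mul_add]
          | add z₁ z₂ ih₁ ih₂ =>
              obtain ⟨ha₁, hb₁⟩ := ih₁
              obtain ⟨ha₂, hb₂⟩ := ih₂
              constructor
              · rw [add_mul, map_add, ha₁, ha₂, map_add, add_mul]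
              · rw [add_mul, map_add, hb₁, hb₂, add_mul]
      | add u₁ u₂ ih₁ ih₂ =>
          rw [map_add]; exact Subalgebra.add_mem _ ih₁ ih₂
    · intro hT
      have hT' := hT'mem T hT
      set f : Fin n → Module.End k A := fun i =>
        (Finsupp.lapply i) ∘ₗ (tcoeff b A).toLinearMap ∘ₗ T ∘ₗ ((TensorProduct.mk k A S).flip 1)
        with hf_def
      have hkey : ∀ a : A, T (a ⊗ₜ[k] (1 : S)) = ∑ i, (f i a) ⊗ₜ[k] b i :=
        fun a => (sum_tcoeff b A _).symm
      have hfc : ∀ i, f i ∈ centroid k A := by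
        intro i x y
        have hmul : ∀ s : S, (x * y) ⊗ₜ[k] s = (x ⊗ₜ[k] (1 : S)) * (y ⊗ₜ[k] s) := by
          intro s; rw [Algebra.TensorProduct.tmul_mul_tmul, one_mul]
        constructor
        · have h1 : T ((x * y) ⊗ₜ[k] (1 : S)) = ∑ j, (f j x * y) ⊗ₜ[k] b j := by
            rw [hmul 1, (hT' _ _).1, hkey x, Finset.sum_mul]
            exact Finset.sum_congr rfl fun j _ => by
              rw [Algebra.TensorProduct.tmul_mul_tmul, mul_one]
          calc f i (x * y) = tcoeff b A (T ((x * y) ⊗ₜ[k] (1 : S))) i := rfl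
          _ = tcoeff b A (∑ j, (f j x * y) ⊗ₜ[k] b j) i := by rw [h1]
          _ = f i x * y := tcoeff_sum b A _ i
        · have h1 : T ((x * y) ⊗ₜ[k] (1 : S)) = ∑ j, (x * f j y) ⊗ₜ[k] b j := by
            have hmul' : (x * y) ⊗ₜ[k] (1 : S) = (x ⊗ₜ[k] (1 : S)) * (y ⊗ₜ[k] (1 : S)) := by
              rw [Algebra.TensorProduct.tmul_mul_tmul, mul_one]
            rw [hmul', (hT' _ _).2, hkey y, Finset.mul_sum]
            exact Finset.sum_congr rfl fun j _ => by
              rw [Algebra.TensorProduct.tmul_mul_tmul, one_mul]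
          calc f i (x * y) = tcoeff b A (T ((x * y) ⊗ₜ[k] (1 : S))) i := rfl
          _ = tcoeff b A (∑ j, (x * f j y) ⊗ₜ[k] b j) i := by rw [h1]
          _ = x * f i y := tcoeff_sum b A _ i
      refine ⟨∑ i, (⟨f i, hfc i⟩ : ↥(centroid k A)) ⊗ₜ[k] b i, ?_⟩
      apply TensorProduct.ext'
      intro a s
      rw [map_sum, LinearMap.sum_apply]
      have hL : ∀ i : Fin n,
          psi k A S ((⟨f i, hfc i⟩ : ↥(centroid k A)) ⊗ₜ[k] b i) (a ⊗ₜ[k] s)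
            = (f i a) ⊗ₜ[k] (b i * s) := fun i => psi_tmul k A S _ _ a s
      rw [Finset.sum_congr rfl fun i _ => hL i]
      have ha : a ∈ Submodule.span k {z : A | ∃ x y : A, x * y = z} := by
        rw [hA]; exact Submodule.mem_top
      refine (Submodule.span_induction
        (p := fun a _ => T (a ⊗ₜ[k] s) = ∑ i, (f i a) ⊗ₜ[k] (b i * s)) ?_ ?_ ?_ ?_ ha).symm
      · rintro z ⟨x, y, rfl⟩
        have hmul : (x * y) ⊗ₜ[k] s = (x ⊗ₜ[k] (1 : S)) * (y ⊗ₜ[k] s) := by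
          rw [Algebra.TensorProduct.tmul_mul_tmul, one_mul]
        rw [hmul, (hT' _ _).1, hkey x, Finset.sum_mul]
        exact Finset.sum_congr rfl fun j _ => by
          rw [Algebra.TensorProduct.tmul_mul_tmul, ← (hfc j x y).1]
      · simp
      · intro x y _ _ hx hy
        rw [TensorProduct.add_tmul, map_add, hx, hy, ← Finset.sum_add_distrib]
        exact Finset.sum_congr rfl fun j _ => by rw [map_add, TensorProduct.add_tmul]
      · intro c x _ hx
        rw [← TensorProduct.smul_tmul', map_smul, hx, Finset.smul_sum]
        exact Finset.sum_congr rfl fun j _ => by rw [TensorProduct.smul_tmul', map_smul]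


end
end

section
/- Let A be a pfgc k-algebra and let S be a commutative associative unital k-algebra. Then the map ψ : C(A)⊗S → C(A⊗S), determined by ψ(γ⊗s) = γ⊗L_s, is an isomorphism of associative algebras. -/
open TensorProduct

set_option synthInstance.maxHeartbeats 1000000
set_option maxHeartbeats 2000000

noncomputable section

section AuxPFGC

variable (k S M : Type) [Field k] [CommRing S] [Algebra k S] [AddCommGroup M] [Module k M]

noncomputable instance : DecidableEq (Module.Basis.ofVectorSpaceIndex k S) := Classical.decEq _

/-- `M ⊗ S` is a direct sum of copies of `M`, indexed by a basis of `S`. -/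
noncomputable def tEquiv : M ⊗[k] S ≃ₗ[k] ((Module.Basis.ofVectorSpaceIndex k S) →₀ M) :=
  (TensorProduct.congr (LinearEquiv.refl k M) (Module.Basis.ofVectorSpace k S).repr).trans
    (TensorProduct.finsuppScalarRight k k M _)

variable {k S M}

lemma tEquiv_tmul_apply (m : M) (s : S) (i : Module.Basis.ofVectorSpaceIndex k S) :
    tEquiv k S M (m ⊗ₜ s) i = (Module.Basis.ofVectorSpace k S).repr s i • m := by
  simp [tEquiv]

lemma tEquiv_symm_single (i : Module.Basis.ofVectorSpaceIndex k S) (m : M) :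
    (tEquiv k S M).symm (Finsupp.single i m) = m ⊗ₜ (Module.Basis.ofVectorSpace k S) i := by
  simp [tEquiv, Module.Basis.repr_symm_single_one]

lemma tEquiv_symm_eq (f : (Module.Basis.ofVectorSpaceIndex k S) →₀ M) :
    (tEquiv k S M).symm f = f.sum fun i m => m ⊗ₜ (Module.Basis.ofVectorSpace k S) i := by
  conv_lhs => rw [← Finsupp.sum_single f, map_finsuppSum]
  exact Finsupp.sum_congr fun i _ => tEquiv_symm_single i _

lemma eq_sum_tEquiv (v : M ⊗[k] S) :
    v = ∑ i ∈ (tEquiv k S M v).support,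
      (tEquiv k S M v i) ⊗ₜ (Module.Basis.ofVectorSpace k S) i := by
  conv_lhs => rw [← (tEquiv k S M).symm_apply_apply v, tEquiv_symm_eq]
  rfl

lemma mem_centroid_iff {B : Type} [NonUnitalNonAssocSemiring B] [Module k B]
    [SMulCommClass k B B] [IsScalarTower k B B] {γ : Module.End k B} :
    γ ∈ centroid k B ↔ ∀ x y : B, γ (x * y) = γ x * y ∧ γ (x * y) = x * γ y :=
  Iff.rfl

/-- The centroid of a perfect algebra is commutative. -/
lemma centroid_comm {B : Type} [NonUnitalNonAssocSemiring B] [Module k B]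
    [SMulCommClass k B B] [IsScalarTower k B B] (hB : IsPerfectAlg k B)
    {γ δ : Module.End k B} (hγ : γ ∈ centroid k B) (hδ : δ ∈ centroid k B) (v : B) :
    γ (δ v) = δ (γ v) := by
  rw [mem_centroid_iff] at hγ hδ
  have hv : v ∈ Submodule.span k {z : B | ∃ x y : B, x * y = z} := by
    rw [hB]; exact Submodule.mem_top
  induction hv using Submodule.span_induction with
  | mem z hz =>
    obtain ⟨x, y, rfl⟩ := hz
    rw [(hδ x y).1, (hγ (δ x) y).2, (hγ x y).2, (hδ x (γ y)).1]
  | zero => simp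
  | add u w _ _ hu hw => simp only [map_add, hu, hw]
  | smul c u _ hu => simp only [map_smul, hu]

section WithAlg

variable {A : Type} [NonUnitalNonAssocRing A] [Module k A]
    [SMulCommClass k A A] [IsScalarTower k A A]

lemma tEquiv_mul_right (u : A ⊗[k] S) (y : A) (i : Module.Basis.ofVectorSpaceIndex k S) :
    tEquiv k S A (u * (y ⊗ₜ (1 : S))) i = tEquiv k S A u i * y := by
  induction u using TensorProduct.induction_on with
  | zero => simp
  | tmul a s => simp [tEquiv_tmul_apply, smul_mul_assoc]
  | add u v hu hv => simp [add_mul, hu, hv]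

lemma tEquiv_mul_left (u : A ⊗[k] S) (x : A) (i : Module.Basis.ofVectorSpaceIndex k S) :
    tEquiv k S A ((x ⊗ₜ (1 : S)) * u) i = x * tEquiv k S A u i := by
  induction u using TensorProduct.induction_on with
  | zero => simp
  | tmul a s => simp [tEquiv_tmul_apply, mul_smul_comm]
  | add u v hu hv => simp [mul_add, hu, hv]

lemma tEquiv_map_apply (γ : Module.End k A) (u : A ⊗[k] S) (i : Module.Basis.ofVectorSpaceIndex k S) :
    tEquiv k S A (TensorProduct.map γ LinearMap.id u) i = γ (tEquiv k S A u i) := by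
  induction u using TensorProduct.induction_on with
  | zero => simp
  | tmul a s => simp [tEquiv_tmul_apply]
  | add u v hu hv => simp [hu, hv]

end WithAlg

end AuxPFGC

/-- Lemma 1.1(iii): if `A` is a pfgc algebra (nonzero, perfect and finitely generated as a
module over its centroid) and `S` is a commutative associative unital algebra, then
`ψ : C(A) ⊗ S → C(A ⊗ S)` is an isomorphism of associative algebras. -/
theorem psi_isomorphism_of_pfgc
    (k A S : Type) [Field k] [NonUnitalNonAssocRing A] [Module k A]
    [SMulCommClass k A A] [IsScalarTower k A A] [CommRing S] [Algebra k S]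
    (hA0 : Nontrivial A) (hA : IsPerfectAlg k A)
    (hfgc : FGOverSet k A (centroid k A : Set (Module.End k A))) :
    Function.Injective (psi k A S) ∧
      (∀ x y : ↥(centroid k A) ⊗[k] S, psi k A S (x * y) = psi k A S x * psi k A S y) ∧
      psi k A S 1 = 1 ∧
      (∀ T : Module.End k (A ⊗[k] S),
        T ∈ LinearMap.range (psi k A S) ↔ T ∈ centroid k (A ⊗[k] S)) := by
  classical
  obtain ⟨n, a, ha⟩ := hfgc
  -- `psi` on pure tensors
  have psi_tmul : ∀ (γ : ↥(centroid k A)) (s : S),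
      psi k A S (γ ⊗ₜ s) = TensorProduct.map γ.val ((LinearMap.mul k S) s) := by
    intro γ s
    simp [psi]
  -- the range of `psi` lands in the centroid
  have hpsi_cent : ∀ t, psi k A S t ∈ centroid k (A ⊗[k] S) := by
    intro t
    induction t using TensorProduct.induction_on with
    | zero => rw [map_zero]; exact (centroid k (A ⊗[k] S)).zero_mem
    | add u v hu hv => rw [map_add]; exact (centroid k (A ⊗[k] S)).add_mem hu hv
    | tmul γ s =>
      rw [psi_tmul, mem_centroid_iff]
      intro x y
      constructor
      · induction x using TensorProduct.induction_on with
        | zero => simp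
        | add u v hu hv => simp only [add_mul, map_add, hu, hv]
        | tmul a t =>
          induction y using TensorProduct.induction_on with
          | zero => simp
          | add u v hu hv => simp only [mul_add, map_add, hu, hv]
          | tmul a' t' =>
            simp only [Algebra.TensorProduct.tmul_mul_tmul, TensorProduct.map_tmul,
              LinearMap.mul_apply']
            rw [(γ.2 a a').1, mul_assoc]
      · induction x using TensorProduct.induction_on with
        | zero => simp
        | add u v hu hv => simp only [add_mul, map_add, hu, hv]
        | tmul a t =>
          induction y using TensorProduct.induction_on with
          | zero => simp
          | add u v hu hv => simp only [mul_add, map_add, hu, hv]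
          | tmul a' t' =>
            simp only [Algebra.TensorProduct.tmul_mul_tmul, TensorProduct.map_tmul,
              LinearMap.mul_apply']
            rw [(γ.2 a a').2]
            congr 1
            ring
  -- key computation for injectivity
  have key : ∀ (t : ↥(centroid k A) ⊗[k] S) (x : A) (i : Module.Basis.ofVectorSpaceIndex k S),
      tEquiv k S A (psi k A S t (x ⊗ₜ (1 : S))) i
        = ((tEquiv k S ↥(centroid k A) t i : Module.End k A) x) := by
    intro t x i
    induction t using TensorProduct.induction_on with
    | zero => simp
    | tmul γ s =>
      rw [psi_tmul]
      simp [tEquiv_tmul_apply]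
    | add u v hu hv => simp [map_add, hu, hv]
  refine ⟨?_, ?_, ?_, ?_⟩
  · -- injectivity
    rw [injective_iff_map_eq_zero]
    intro t ht
    have h0 : tEquiv k S ↥(centroid k A) t = 0 := by
      ext i x
      have := key t x i
      rw [ht] at this
      simpa using this.symm
    have := congrArg (tEquiv k S ↥(centroid k A)).symm h0
    simpa using this
  · -- multiplicativity
    intro x y
    induction x using TensorProduct.induction_on with
    | zero => simp [zero_mul]
    | add u v hu hv => simp only [add_mul, map_add, hu, hv]
    | tmul γ s =>
      induction y using TensorProduct.induction_on with
      | zero => simp [mul_zero]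
      | add u v hu hv => simp only [mul_add, map_add, hu, hv]
      | tmul γ' s' =>
        rw [Algebra.TensorProduct.tmul_mul_tmul, psi_tmul, psi_tmul, psi_tmul,
          Module.End.mul_eq_comp, ← TensorProduct.map_comp]
        congr 1
        ext t
        simp [mul_assoc]
  · -- unit
    rw [Algebra.TensorProduct.one_def, psi_tmul]
    apply TensorProduct.ext'
    intro x s
    simp
  · -- range = centroid
    intro T
    constructor
    · rintro ⟨t, rfl⟩; exact hpsi_cent t
    intro hT
    rw [mem_centroid_iff] at hT
    -- spanning set of `A ⊗ S` by products of a special form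
    have hspan : Submodule.span k
        {z : A ⊗[k] S | ∃ (x y : A) (s : S), (x ⊗ₜ (1 : S)) * (y ⊗ₜ s) = z} = ⊤ := by
      rw [eq_top_iff, ← TensorProduct.span_tmul_eq_top k A S, Submodule.span_le]
      rintro _ ⟨x, s, rfl⟩
      have hx : x ∈ Submodule.span k {z : A | ∃ u v : A, u * v = z} := by
        rw [hA]; exact Submodule.mem_top
      have h2 := Submodule.apply_mem_span_image_of_mem_span
        ((TensorProduct.mk k A S).flip s) hx
      refine Submodule.span_le.mpr ?_ h2
      rintro _ ⟨z, ⟨u, v, rfl⟩, rfl⟩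
      apply Submodule.subset_span
      exact ⟨u, v, s, by simp⟩
    -- `A ⊗ S` is perfect
    have hAS : IsPerfectAlg k (A ⊗[k] S) := by
      rw [IsPerfectAlg, eq_top_iff, ← hspan]
      apply Submodule.span_mono
      rintro _ ⟨x, y, s, rfl⟩
      exact ⟨_, _, rfl⟩
    -- the coordinate maps of `T`
    set Tc : Module.Basis.ofVectorSpaceIndex k S → Module.End k A :=
      fun i => (Finsupp.lapply i) ∘ₗ (tEquiv k S A).toLinearMap ∘ₗ T ∘ₗ
        ((TensorProduct.mk k A S).flip 1) with hTcdef
    have hTc_apply : ∀ i x, Tc i x = tEquiv k S A (T (x ⊗ₜ (1 : S))) i := fun i x => rfl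
    have hTc_mem : ∀ i, Tc i ∈ centroid k A := by
      intro i
      rw [mem_centroid_iff]
      intro x y
      have h1 : ((x * y : A) ⊗ₜ (1 : S) : A ⊗[k] S)
          = (x ⊗ₜ (1 : S)) * (y ⊗ₜ (1 : S)) := by simp
      constructor
      · rw [hTc_apply, hTc_apply, h1, (hT _ _).1, tEquiv_mul_right]
      · rw [hTc_apply, hTc_apply, h1, (hT _ _).2, tEquiv_mul_left]
    -- uniform finiteness of supports
    set Λ : Finset (Module.Basis.ofVectorSpaceIndex k S) :=
      Finset.univ.biUnion (fun j : Fin n => (tEquiv k S A (T (a j ⊗ₜ (1 : S)))).support)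
      with hΛdef
    have hsupp : ∀ x : A, (tEquiv k S A (T (x ⊗ₜ (1 : S)))).support ⊆ Λ := by
      intro x
      obtain ⟨γ, hγ, hx⟩ := ha x
      have hγc : ∀ j, TensorProduct.map (γ j) LinearMap.id ∈ centroid k (A ⊗[k] S) := by
        intro j
        have := hpsi_cent ((⟨γ j, hγ j⟩ : ↥(centroid k A)) ⊗ₜ (1 : S))
        rw [psi_tmul] at this
        have e : (LinearMap.mul k S) 1 = LinearMap.id := by
          ext t
          simp
        rw [e] at this
        exact this
      have hTx : T (x ⊗ₜ (1 : S))
          = ∑ j, TensorProduct.map (γ j) LinearMap.id (T (a j ⊗ₜ (1 : S))) := by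
        have hx1 : (x ⊗ₜ (1 : S) : A ⊗[k] S)
            = ∑ j, TensorProduct.map (γ j) LinearMap.id (a j ⊗ₜ (1 : S)) := by
          conv_lhs => rw [hx]
          rw [TensorProduct.sum_tmul]
          exact Finset.sum_congr rfl fun j _ => by simp
        rw [hx1, map_sum]
        exact Finset.sum_congr rfl fun j _ =>
          centroid_comm hAS (mem_centroid_iff.mpr hT) (hγc j) _
      intro i hi
      rw [Finsupp.mem_support_iff] at hi
      rw [hΛdef, Finset.mem_biUnion]
      by_contra hc
      push_neg at hc
      apply hi
      rw [hTx, map_sum, Finsupp.finset_sum_apply]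
      refine Finset.sum_eq_zero fun j _ => ?_
      have h0 : tEquiv k S A (T (a j ⊗ₜ (1 : S))) i = 0 := by
        have := hc j (Finset.mem_univ j)
        rwa [Finsupp.notMem_support_iff] at this
      rw [tEquiv_map_apply, h0, map_zero]
    -- the candidate preimage
    set u : ↥(centroid k A) ⊗[k] S :=
      ∑ i ∈ Λ, (⟨Tc i, hTc_mem i⟩ : ↥(centroid k A)) ⊗ₜ (Module.Basis.ofVectorSpace k S i : S)
      with hudef
    have hψu := hpsi_cent u
    rw [mem_centroid_iff] at hψu
    have hagree : ∀ x : A, psi k A S u (x ⊗ₜ (1 : S)) = T (x ⊗ₜ (1 : S)) := by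
      intro x
      have hTdecomp : T (x ⊗ₜ (1 : S))
          = ∑ i ∈ Λ, (tEquiv k S A (T (x ⊗ₜ (1 : S))) i) ⊗ₜ (Module.Basis.ofVectorSpace k S) i := by
        conv_lhs => rw [eq_sum_tEquiv (T (x ⊗ₜ (1 : S)))]
        exact Finset.sum_subset (hsupp x) fun i _ hnot => by
          rw [Finsupp.notMem_support_iff.mp hnot, TensorProduct.zero_tmul]
      have hLHS : psi k A S u (x ⊗ₜ (1 : S))
          = ∑ i ∈ Λ, (Tc i x) ⊗ₜ (Module.Basis.ofVectorSpace k S) i := by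
        rw [hudef, map_sum, LinearMap.sum_apply]
        refine Finset.sum_congr rfl fun i _ => ?_
        rw [psi_tmul]
        simp
      rw [hLHS, hTdecomp]
      exact Finset.sum_congr rfl fun i _ => by rw [hTc_apply]
    refine ⟨u, ?_⟩
    apply LinearMap.ext
    intro v
    have hv : v ∈ Submodule.span k
        {z : A ⊗[k] S | ∃ (x y : A) (s : S), (x ⊗ₜ (1 : S)) * (y ⊗ₜ s) = z} := by
      rw [hspan]; exact Submodule.mem_top
    induction hv using Submodule.span_induction with
    | mem z hz =>
      obtain ⟨x, y, s, rfl⟩ := hz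
      rw [(hψu _ _).1, (hT _ _).1, hagree x]
    | zero => simp
    | add p q _ _ hp hq => simp only [map_add, hp, hq]
    | smul c p _ hp => simp only [map_smul, hp]

end
end
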